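/- Suppose max_t Σ_{j=1}^∞ j‖B_{j,t}‖ < ∞ and max_t Σ_{j=0}^∞ ‖B_{j,t}‖ < ∞. Then for each t, Σ_{j=0}^∞ ‖B̃^r_{j,t}‖ ≤ M·Σ_{j=1}^∞ j‖B_{j,t}‖ < ∞ for some constant M (uniformly in r and t), where B̃^r_{j,t} = Σ_{k=j+1}^∞ (B_{k+r,t} ⊗ B_{k,t}). In particular Σ_j j‖B_{j+r,t}‖·‖B_{j,t}‖ < ∞ since ‖A⊗B‖ = ‖A‖·‖B‖. -/

import Mathlib

open scoped BigOperators Kronecker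

attribute [local instance] Matrix.frobeniusNormedAddCommGroup

set_option maxHeartbeats 1000000

/-- The equivalence between `ℕ × ℕ` and `Σ n, Fin n` given by `(j, k) ↦ ⟨j + 1 + k, j⟩`. -/
def pairFinEquiv : (ℕ × ℕ) ≃ (Σ n : ℕ, Fin n) where
  toFun p := ⟨p.1 + 1 + p.2, ⟨p.1, by omega⟩⟩
  invFun x := ((x.2 : ℕ), x.1 - 1 - (x.2 : ℕ))
  left_inv p := by simp
  right_inv x := by
    rcases x with ⟨n, i, hi⟩
    have h : (i : ℕ) + 1 + (n - 1 - (i : ℕ)) = n := by omega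
    refine Sigma.ext h ?_
    rw [Fin.heq_ext_iff h]

lemma frob_norm_kronecker {l m n p : Type*} [Fintype l] [Fintype m] [Fintype n] [Fintype p]
    (A : Matrix l m ℝ) (B : Matrix n p ℝ) : ‖A ⊗ₖ B‖ = ‖A‖ * ‖B‖ := by
  rw [Matrix.frobenius_norm_def, Matrix.frobenius_norm_def, Matrix.frobenius_norm_def,
    ← Real.mul_rpow (by positivity) (by positivity)]
  congr 1
  rw [Finset.sum_mul_sum]
  simp_rw [Fintype.sum_prod_type, Matrix.kroneckerMap_apply, norm_mul,
    Real.mul_rpow (norm_nonneg _) (norm_nonneg _), Finset.mul_sum, Finset.sum_mul]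
  exact Finset.sum_congr rfl fun i _ => Finset.sum_congr rfl fun i' _ =>
    Finset.sum_comm ..

/-- Tails of a nonnegative series with summable `n * c n` are summable, with sum
`∑ n, n * c n`. -/
lemma tails_summable (c : ℕ → ℝ) (hc : ∀ n, 0 ≤ c n)
    (h1 : Summable fun n : ℕ => (n : ℝ) * c n) :
    (Summable fun j : ℕ => ∑' k : ℕ, c (j + 1 + k)) ∧
      (∑' j : ℕ, ∑' k : ℕ, c (j + 1 + k)) = ∑' n : ℕ, (n : ℝ) * c n := by
  have hsig : Summable fun x : Σ n : ℕ, Fin n => c x.1 := by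
    rw [summable_sigma_of_nonneg (fun x => hc _)]
    refine ⟨fun n => Summable.of_finite, ?_⟩
    have : ∀ n : ℕ, (∑' i : Fin n, c n) = (n : ℝ) * c n := fun n => by
      simp [tsum_fintype]
    simpa [this] using h1
  have hprod : Summable fun p : ℕ × ℕ => c (p.1 + 1 + p.2) := by
    have := hsig.comp_injective pairFinEquiv.injective
    simpa [pairFinEquiv, Function.comp_def] using this
  have hfac := (summable_prod_of_nonneg (f := fun p : ℕ × ℕ => c (p.1 + 1 + p.2))
    (fun p => hc _)).mp hprod
  refine ⟨hfac.2, ?_⟩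
  have h2 : (∑' p : ℕ × ℕ, c (p.1 + 1 + p.2)) = ∑' j : ℕ, ∑' k : ℕ, c (j + 1 + k) :=
    hprod.tsum_prod' (fun j => hfac.1 j)
  have h3 : (∑' p : ℕ × ℕ, c (p.1 + 1 + p.2)) = ∑' x : Σ n : ℕ, Fin n, c x.1 := by
    rw [← pairFinEquiv.tsum_eq (f := fun x : Σ n : ℕ, Fin n => c x.1)]
    rfl
  have h4 : (∑' x : Σ n : ℕ, Fin n, c x.1) = ∑' n : ℕ, (n : ℝ) * c n := by
    rw [hsig.tsum_sigma' (fun n => Summable.of_finite)]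
    exact tsum_congr fun n => by simp [tsum_fintype]
  rw [← h2, h3, h4]

/-- Uniform bound on the tails of the Kronecker coefficient series: under
`max_t Σ_j j‖B_{j,t}‖ < ∞` and `max_t Σ_j ‖B_{j,t}‖ < ∞`, there is a constant `M` (uniform in
`r` and `t`) with `Σ_j ‖B̃^r_{j,t}‖ ≤ M · Σ_j j‖B_{j,t}‖`, where
`B̃^r_{j,t} = Σ_{k>j} B_{k+r,t} ⊗ B_{k,t}`; in particular `Σ_j j‖B_{j+r,t}‖·‖B_{j,t}‖ < ∞`. -/
theorem kronecker_tail_bound (d : ℕ) (B : ℕ → ℕ → Matrix (Fin d) (Fin d) ℝ) (K0 K1 : ℝ)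
    (hsum1 : ∀ t : ℕ, Summable fun j : ℕ => (j : ℝ) * ‖B j t‖)
    (hK1 : ∀ t : ℕ, ∑' j : ℕ, (j : ℝ) * ‖B j t‖ ≤ K1)
    (hsum0 : ∀ t : ℕ, Summable fun j : ℕ => ‖B j t‖)
    (hK0 : ∀ t : ℕ, ∑' j : ℕ, ‖B j t‖ ≤ K0) :
    ∃ M : ℝ, ∀ r t : ℕ,
      (Summable fun j : ℕ => ‖∑' k : ℕ, (B (j + 1 + k + r) t) ⊗ₖ (B (j + 1 + k) t)‖) ∧
      (∑' j : ℕ, ‖∑' k : ℕ, (B (j + 1 + k + r) t) ⊗ₖ (B (j + 1 + k) t)‖ ≤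
        M * ∑' j : ℕ, (j : ℝ) * ‖B j t‖) ∧
      Summable fun j : ℕ => (j : ℝ) * (‖B (j + r) t‖ * ‖B j t‖) := by
  refine ⟨K0, fun r t => ?_⟩
  set c : ℕ → ℝ := fun n => ‖B n t‖ with hc
  have hc0 : ∀ n, 0 ≤ c n := fun n => norm_nonneg _
  have hK0nn : 0 ≤ K0 := le_trans (tsum_nonneg fun j => norm_nonneg _) (hK0 t)
  have hcK0 : ∀ n, c n ≤ K0 := fun n =>
    le_trans ((hsum0 t).le_tsum n fun _ _ => norm_nonneg _) (hK0 t)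
  obtain ⟨hT, hTsum⟩ := tails_summable c hc0 (hsum1 t)
  have hTail : ∀ j : ℕ, Summable fun k : ℕ => c (j + 1 + k) := fun j =>
    ((summable_nat_add_iff (j + 1)).mpr (hsum0 t)).congr fun k => by rw [add_comm]
  -- summability of the inner norm series
  have hinner : ∀ j : ℕ, Summable fun k : ℕ =>
      ‖(B (j + 1 + k + r) t) ⊗ₖ (B (j + 1 + k) t)‖ := by
    intro j
    refine Summable.of_nonneg_of_le (fun k => norm_nonneg _) (fun k => ?_)
      ((hTail j).mul_left K0)
    rw [frob_norm_kronecker]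
    exact mul_le_mul_of_nonneg_right (hcK0 _) (hc0 _)
  -- pointwise bound on the norms of the tails
  have hbound : ∀ j : ℕ, ‖∑' k : ℕ, (B (j + 1 + k + r) t) ⊗ₖ (B (j + 1 + k) t)‖ ≤
      K0 * ∑' k : ℕ, c (j + 1 + k) := by
    intro j
    calc ‖∑' k : ℕ, (B (j + 1 + k + r) t) ⊗ₖ (B (j + 1 + k) t)‖
        ≤ ∑' k : ℕ, ‖(B (j + 1 + k + r) t) ⊗ₖ (B (j + 1 + k) t)‖ :=
          norm_tsum_le_tsum_norm (hinner j)
      _ ≤ ∑' k : ℕ, K0 * c (j + 1 + k) := by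
          refine (hinner j).tsum_le_tsum (fun k => ?_) ((hTail j).mul_left K0)
          rw [frob_norm_kronecker]
          exact mul_le_mul_of_nonneg_right (hcK0 _) (hc0 _)
      _ = K0 * ∑' k : ℕ, c (j + 1 + k) := tsum_mul_left
  have hTK : Summable fun j : ℕ => K0 * ∑' k : ℕ, c (j + 1 + k) := hT.mul_left K0
  have hS : Summable fun j : ℕ =>
      ‖∑' k : ℕ, (B (j + 1 + k + r) t) ⊗ₖ (B (j + 1 + k) t)‖ :=
    Summable.of_nonneg_of_le (fun j => norm_nonneg _) hbound hTK
  refine ⟨hS, ?_, ?_⟩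
  · calc (∑' j : ℕ, ‖∑' k : ℕ, (B (j + 1 + k + r) t) ⊗ₖ (B (j + 1 + k) t)‖)
        ≤ ∑' j : ℕ, K0 * ∑' k : ℕ, c (j + 1 + k) := hS.tsum_le_tsum hbound hTK
      _ = K0 * ∑' j : ℕ, ∑' k : ℕ, c (j + 1 + k) := tsum_mul_left
      _ = K0 * ∑' n : ℕ, (n : ℝ) * c n := by rw [hTsum]
  · refine Summable.of_nonneg_of_le
      (fun j => mul_nonneg (Nat.cast_nonneg _) (mul_nonneg (hc0 _) (hc0 _)))
      (fun j => ?_) ((hsum1 t).mul_left K0)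
    have : (j : ℝ) * (c (j + r) * c j) ≤ (j : ℝ) * (K0 * c j) :=
      mul_le_mul_of_nonneg_left (mul_le_mul_of_nonneg_right (hcK0 _) (hc0 _))
        (Nat.cast_nonneg _)
    calc (j : ℝ) * (c (j + r) * c j) ≤ (j : ℝ) * (K0 * c j) := this
      _ = K0 * ((j : ℝ) * c j) := by ring
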